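/- Let n be a positive integer, M an n×n real symmetric matrix, and Z an n×n real skew-symmetric matrix. Then every eigenvalue μ of M + Z satisfies λmin(M) ≤ Re(μ) ≤ λmax(M). -/

import Mathlib

open Matrix

/-- Smallest eigenvalue of a Hermitian (real symmetric) matrix. -/
noncomputable def lamMin {n : Type*} [Fintype n] [DecidableEq n] {A : Matrix n n ℝ}
    (hA : A.IsHermitian) : ℝ := ⨅ i, hA.eigenvalues i

/-- Largest eigenvalue of a Hermitian (real symmetric) matrix. -/
noncomputable def lamMax {n : Type*} [Fintype n] [DecidableEq n] {A : Matrix n n ℝ}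
    (hA : A.IsHermitian) : ℝ := ⨆ i, hA.eigenvalues i

section Aux

open ComplexOrder

variable {k : Type*} [Fintype k] [DecidableEq k]

private lemma psd_map' {A : Matrix k k ℝ} (hA : A.PosSemidef) :
    (A.map (algebraMap ℝ ℂ)).PosSemidef := by
  obtain ⟨B, rfl⟩ : ∃ B : Matrix k k ℝ, A = Bᴴ * B := by
    open scoped MatrixOrder in
    obtain ⟨B, rfl⟩ := CStarAlgebra.nonneg_iff_eq_star_mul_self.mp hA.nonneg
    exact ⟨B, rfl⟩
  have h : (Bᴴ * B).map (algebraMap ℝ ℂ)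
      = (B.map (algebraMap ℝ ℂ))ᴴ * (B.map (algebraMap ℝ ℂ)) := by
    rw [Matrix.map_mul]
    congr 1
    rw [Matrix.conjTranspose_map (algebraMap ℝ ℂ) (fun a => by simp [Complex.conj_ofReal])]
  rw [h]
  exact posSemidef_conjTranspose_mul_self _

private lemma shift_min' {A : Matrix k k ℝ} (hA : A.IsHermitian) {c : ℝ}
    (hc : ∀ i, c ≤ hA.eigenvalues i) : (A - c • 1).PosSemidef := by
  have hU : (hA.eigenvectorUnitary : Matrix k k ℝ) *
      (star (hA.eigenvectorUnitary : Matrix k k ℝ)) = 1 :=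
    (Matrix.mem_unitaryGroup_iff).mp (hA.eigenvectorUnitary).2
  have h1 : A - c • 1 = (hA.eigenvectorUnitary : Matrix k k ℝ) *
      diagonal (fun i => hA.eigenvalues i - c) *
      (hA.eigenvectorUnitary : Matrix k k ℝ)ᴴ := by
    conv_lhs => rw [hA.spectral_theorem, Unitary.conjStarAlgAut_apply]
    rw [← star_eq_conjTranspose]
    have h2 : c • (1 : Matrix k k ℝ) = (hA.eigenvectorUnitary : Matrix k k ℝ) *
        (c • 1) * (star (hA.eigenvectorUnitary : Matrix k k ℝ)) := by
      rw [Matrix.mul_smul, Matrix.smul_mul, mul_one, hU]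
    conv_lhs => rw [h2]
    rw [← Matrix.sub_mul, ← Matrix.mul_sub]
    congr 2
    ext i j
    by_cases hij : i = j <;>
      simp [hij, diagonal_apply, Matrix.sub_apply, Matrix.smul_apply, Matrix.one_apply]
  rw [h1]
  exact (PosSemidef.diagonal (fun i => by simpa using hc i)).mul_mul_conjTranspose_same _

private lemma shift_max' {A : Matrix k k ℝ} (hA : A.IsHermitian) {c : ℝ}
    (hc : ∀ i, hA.eigenvalues i ≤ c) : (c • 1 - A).PosSemidef := by
  have hU : (hA.eigenvectorUnitary : Matrix k k ℝ) *
      (star (hA.eigenvectorUnitary : Matrix k k ℝ)) = 1 :=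
    (Matrix.mem_unitaryGroup_iff).mp (hA.eigenvectorUnitary).2
  have h1 : c • 1 - A = (hA.eigenvectorUnitary : Matrix k k ℝ) *
      diagonal (fun i => c - hA.eigenvalues i) *
      (hA.eigenvectorUnitary : Matrix k k ℝ)ᴴ := by
    conv_lhs => rw [hA.spectral_theorem, Unitary.conjStarAlgAut_apply]
    rw [← star_eq_conjTranspose]
    have h2 : c • (1 : Matrix k k ℝ) = (hA.eigenvectorUnitary : Matrix k k ℝ) *
        (c • 1) * (star (hA.eigenvectorUnitary : Matrix k k ℝ)) := by
      rw [Matrix.mul_smul, Matrix.smul_mul, mul_one, hU]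
    conv_lhs => rw [h2]
    rw [← Matrix.sub_mul, ← Matrix.mul_sub]
    congr 2
    ext i j
    by_cases hij : i = j <;>
      simp [hij, diagonal_apply, Matrix.sub_apply, Matrix.smul_apply, Matrix.one_apply]
  rw [h1]
  exact (PosSemidef.diagonal (fun i => by simpa using hc i)).mul_mul_conjTranspose_same _

private lemma map_sub_smul' (A : Matrix k k ℝ) (c : ℝ) :
    (A - c • 1).map (algebraMap ℝ ℂ)
      = A.map (algebraMap ℝ ℂ) - (c : ℂ) • 1 := by
  ext i j
  by_cases hij : i = j <;>
    simp [hij, Matrix.map_apply, Matrix.sub_apply, Matrix.smul_apply, Matrix.one_apply]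

private lemma map_smul_sub' (A : Matrix k k ℝ) (c : ℝ) :
    (c • 1 - A).map (algebraMap ℝ ℂ)
      = (c : ℂ) • 1 - A.map (algebraMap ℝ ℂ) := by
  ext i j
  by_cases hij : i = j <;>
    simp [hij, Matrix.map_apply, Matrix.sub_apply, Matrix.smul_apply, Matrix.one_apply]

end Aux

theorem stmt13 {n : ℕ} (hn : 0 < n)
    (M Z : Matrix (Fin n) (Fin n) ℝ)
    (hM : M.IsHermitian) (hZ : Zᵀ = -Z) :
    ∀ μ ∈ spectrum ℂ ((M + Z).map (algebraMap ℝ ℂ)),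
      lamMin hM ≤ μ.re ∧ μ.re ≤ lamMax hM := by
  haveI : Nonempty (Fin n) := Fin.pos_iff_nonempty.mp hn
  intro μ hμ
  set f := algebraMap ℝ ℂ with hf
  -- eigenvector
  rw [← AlgEquiv.spectrum_eq (Matrix.toLinAlgEquiv' : Matrix (Fin n) (Fin n) ℂ ≃ₐ[ℂ] _),
    ← Module.End.hasEigenvalue_iff_mem_spectrum] at hμ
  obtain ⟨v, hv⟩ := hμ.exists_hasEigenvector
  have hv0 : v ≠ 0 := hv.2
  have heig : (M + Z).map f *ᵥ v = μ • v := by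
    simpa [Matrix.toLinAlgEquiv'_apply] using hv.apply_eq_smul
  -- split the matrix
  have hsplit : (M + Z).map f = M.map f + Z.map f := by
    ext i j; simp [Matrix.map_apply, Matrix.add_apply]
  set m := star v ⬝ᵥ (M.map f *ᵥ v) with hm
  set z := star v ⬝ᵥ (Z.map f *ᵥ v) with hzdef
  -- the skew part has zero real part
  have hZc : (Z.map f)ᴴ = -(Z.map f) := by
    ext i j
    have h := congrFun (congrFun hZ i) j
    simp only [Matrix.transpose_apply, Matrix.neg_apply] at h
    simp [Matrix.conjTranspose_apply, Matrix.map_apply, Matrix.neg_apply, hf,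
      Complex.conj_ofReal, h]
  have hzstar : star z = -z := by
    have h2 : star z = star (Z.map f *ᵥ v) ⬝ᵥ v := by
      rw [hzdef, Matrix.star_dotProduct, star_star]
    rw [h2, Matrix.star_mulVec, hZc, Matrix.vecMul_neg, neg_dotProduct,
      ← Matrix.dotProduct_mulVec, hzdef]
  have hzre : z.re = 0 := by
    have := congrArg Complex.re hzstar
    simp only [Complex.star_def, Complex.conj_re, Complex.neg_re] at this
    linarith
  -- norm of eigenvector
  set N := ∑ i, Complex.normSq (v i) with hNdef
  have ht : star v ⬝ᵥ v = (N : ℂ) := by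
    have h1 : ∀ i, star (v i) * v i = (Complex.normSq (v i) : ℂ) := fun i => by
      rw [Complex.star_def, mul_comm, Complex.mul_conj]
    simp only [dotProduct, Pi.star_apply, h1]
    rw [hNdef]
    norm_cast
  have hN : 0 < N := by
    obtain ⟨i, hi⟩ := Function.ne_iff.mp hv0
    exact Finset.sum_pos' (fun j _ => Complex.normSq_nonneg _)
      ⟨i, Finset.mem_univ i, Complex.normSq_pos.mpr hi⟩
  -- the eigen-equation for the quadratic form
  have heq : m + z = μ * (N : ℂ) := by
    rw [hm, hzdef, ← dotProduct_add, ← Matrix.add_mulVec, ← hsplit, heig,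
      dotProduct_smul, smul_eq_mul, ht]
  have hmre : m.re = μ.re * N := by
    have := congrArg Complex.re heq
    simp only [Complex.add_re, Complex.mul_re, Complex.ofReal_re, Complex.ofReal_im,
      mul_zero, sub_zero, hzre, add_zero] at this
    exact this
  -- Rayleigh bounds
  have hmin : ∀ i, lamMin hM ≤ hM.eigenvalues i := fun i =>
    ciInf_le (Set.Finite.bddBelow (Set.finite_range _)) i
  have hmax : ∀ i, hM.eigenvalues i ≤ lamMax hM := fun i =>
    le_ciSup (Set.Finite.bddAbove (Set.finite_range _)) i
  have hlow : lamMin hM * N ≤ m.re := by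
    have h := (psd_map' (shift_min' hM hmin)).re_dotProduct_nonneg v
    rw [map_sub_smul'] at h
    simp only [Matrix.sub_mulVec, dotProduct_sub, Matrix.smul_mulVec,
      Matrix.one_mulVec, dotProduct_smul, smul_eq_mul, ht, RCLike.re_to_complex,
      Complex.sub_re, Complex.mul_re, Complex.ofReal_re, Complex.ofReal_im,
      mul_zero, sub_zero, ← hm] at h
    linarith
  have hhigh : m.re ≤ lamMax hM * N := by
    have h := (psd_map' (shift_max' hM hmax)).re_dotProduct_nonneg v
    rw [map_smul_sub'] at h
    simp only [Matrix.sub_mulVec, dotProduct_sub, Matrix.smul_mulVec,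
      Matrix.one_mulVec, dotProduct_smul, smul_eq_mul, ht, RCLike.re_to_complex,
      Complex.sub_re, Complex.mul_re, Complex.ofReal_re, Complex.ofReal_im,
      mul_zero, sub_zero, ← hm] at h
    linarith
  rw [hmre] at hlow hhigh
  constructor
  · exact le_of_mul_le_mul_right hlow hN
  · exact le_of_mul_le_mul_right hhigh hN
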